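/- Let ε = (ε_n) be a sequence in (0,1] and ω a non-principal ultrafilter on ℕ with lim_ω ε_n = 0. Then the valued field H(ω) = A^ε/ker(ω) with norm |x|_ω = lim_ω |x_n|^{ε_n} is algebraically closed. Moreover its value group |H(ω)*| is all of ℝ_{>0}. -/

import Mathlib

open Filter

lemma rpow_add_le_aux {a b p : ℝ} (ha : 0 ≤ a) (hb : 0 ≤ b) (hp : 0 ≤ p) (hp1 : p ≤ 1) :
    (a + b) ^ p ≤ a ^ p + b ^ p := by
  have h := NNReal.rpow_add_le_add_rpow a.toNNReal b.toNNReal hp hp1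
  have h' := NNReal.coe_le_coe.2 h
  push_cast at h'
  rwa [Real.coe_toNNReal a ha, Real.coe_toNNReal b hb] at h'

lemma rpow_sum_le_aux {p : ℝ} (hp : 0 < p) (hp1 : p ≤ 1) {ι : Type*} (s : Finset ι)
    (f : ι → ℝ) (hf : ∀ i, 0 ≤ f i) :
    (∑ i ∈ s, f i) ^ p ≤ ∑ i ∈ s, (f i) ^ p := by
  classical
  induction s using Finset.induction_on with
  | empty => simp [Real.zero_rpow hp.ne']
  | @insert a s hx ih =>
    rw [Finset.sum_insert hx, Finset.sum_insert hx]
    calc (f a + ∑ i ∈ s, f i) ^ p ≤ (f a) ^ p + (∑ i ∈ s, f i) ^ p :=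
          rpow_add_le_aux (hf a) (Finset.sum_nonneg fun i _ => hf i) hp.le hp1
      _ ≤ (f a) ^ p + ∑ i ∈ s, (f i) ^ p := by linarith

lemma root_bound_aux {d : ℕ} (hd : 1 ≤ d) (c : Fin d → ℂ) (z : ℂ)
    (hz : z ^ d + ∑ i : Fin d, c i * z ^ (i : ℕ) = 0) :
    ‖z‖ ≤ 1 + ∑ i : Fin d, ‖c i‖ := by
  have hsum0 : 0 ≤ ∑ i : Fin d, ‖c i‖ :=
    Finset.sum_nonneg fun i _ => norm_nonneg _
  by_cases h1 : ‖z‖ ≤ 1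
  · linarith
  push_neg at h1
  have hzd : z ^ d = -∑ i : Fin d, c i * z ^ (i : ℕ) := eq_neg_of_add_eq_zero_left hz
  have habs : (‖z‖) ^ d ≤ ∑ i : Fin d, ‖c i‖ * (‖z‖) ^ (i : ℕ) := by
    rw [← norm_pow, hzd, norm_neg]
    refine le_trans (norm_sum_le _ _) (le_of_eq ?_)
    exact Finset.sum_congr rfl fun i _ => by rw [norm_mul, norm_pow]
  have hle : (‖z‖) ^ d ≤ (∑ i : Fin d, ‖c i‖) * (‖z‖) ^ (d - 1) := by
    refine le_trans habs ?_
    rw [Finset.sum_mul]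
    refine Finset.sum_le_sum fun i _ => ?_
    exact mul_le_mul_of_nonneg_left
      (pow_le_pow_right₀ h1.le (by omega : (i : ℕ) ≤ d - 1)) (norm_nonneg _)
  have hd' : (‖z‖) ^ d = ‖z‖ * (‖z‖) ^ (d - 1) := by
    rw [← pow_succ']
    congr 1
    omega
  have hpos : 0 < (‖z‖) ^ (d - 1) := pow_pos (lt_trans one_pos h1) _
  have : ‖z‖ ≤ ∑ i : Fin d, ‖c i‖ := by
    rw [hd'] at hle
    exact le_of_mul_le_mul_right hle hpos
  linarith

/-- For a non-principal ultrafilter ω with lim_ω ε_n = 0, the field H(ω) = A^ε/ker(ω)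
with norm |x|_ω = lim_ω |x_n|^{ε_n} is algebraically closed (every monic polynomial of
degree d ≥ 1 with coefficients in A^ε has a root in A^ε modulo ker(ω)), and its value
group is all of ℝ_{>0}. -/
theorem stmt_11 (ε : ℕ → ℝ) (hε : ∀ n, ε n ∈ Set.Ioc (0 : ℝ) 1) (ω : Ultrafilter ℕ)
    (hnp : ∀ n : ℕ, ω ≠ pure n) (h0 : Tendsto ε ω (nhds 0)) :
    (∀ d : ℕ, 1 ≤ d → ∀ c : Fin d → ℕ → ℂ,
      (∀ i, ∃ M : ℝ, ∀ n, ‖c i n‖ ^ ε n ≤ M) →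
      ∃ α : ℕ → ℂ, (∃ M : ℝ, ∀ n, ‖α n‖ ^ ε n ≤ M) ∧
        Tendsto
          (fun n => ‖(α n) ^ d + ∑ i : Fin d, c i n * (α n) ^ (i : ℕ)‖ ^ ε n)
          ω (nhds 0)) ∧
    (∀ ρ : ℝ, 0 < ρ → ∃ x : ℕ → ℂ, (∃ M : ℝ, ∀ n, ‖x n‖ ^ ε n ≤ M) ∧
      Tendsto (fun n => ‖x n‖ ^ ε n) ω (nhds ρ)) := by
  constructor
  · intro d hd c hc
    choose M hM using hc
    -- find a root of each coordinate polynomial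
    have hroot : ∀ n, ∃ z : ℂ, z ^ d + ∑ i : Fin d, c i n * z ^ (i : ℕ) = 0 := by
      intro n
      set q : Polynomial ℂ := ∑ i : Fin d, Polynomial.C (c i n) * Polynomial.X ^ (i : ℕ) with hq
      have hqdeg : q.degree < (d : WithBot ℕ) := by
        refine lt_of_le_of_lt (Polynomial.degree_sum_le _ _) ?_
        rw [Finset.sup_lt_iff (by exact_mod_cast WithBot.bot_lt_coe d)]
        intro i _
        exact lt_of_le_of_lt (Polynomial.degree_C_mul_X_pow_le _ _)
          (by exact_mod_cast i.2)
      set p : Polynomial ℂ := Polynomial.X ^ d + q with hp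
      have hXd : (Polynomial.X ^ d : Polynomial ℂ).degree = (d : WithBot ℕ) :=
        Polynomial.degree_X_pow d
      have hpdeg : p.degree = (d : WithBot ℕ) := by
        rw [hp, Polynomial.degree_add_eq_left_of_degree_lt (by rw [hXd]; exact hqdeg), hXd]
      obtain ⟨z, hz⟩ := IsAlgClosed.exists_root p
        (by rw [hpdeg]; exact_mod_cast (by omega : d ≠ 0))
      refine ⟨z, ?_⟩
      have := hz
      rw [Polynomial.IsRoot, hp, hq] at this
      simpa [Polynomial.eval_finset_sum] using this
    choose α hα using hroot
    refine ⟨α, ⟨1 + ∑ i : Fin d, M i, fun n => ?_⟩, ?_⟩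
    · have hMnn : ∀ i, 0 ≤ M i := fun i =>
        le_trans (Real.rpow_nonneg (norm_nonneg _) _) (hM i 0)
      have hbd := root_bound_aux hd (fun i => c i n) (α n) (hα n)
      have hεn := hε n
      calc ‖α n‖ ^ ε n
          ≤ (1 + ∑ i : Fin d, ‖c i n‖) ^ ε n :=
            Real.rpow_le_rpow (norm_nonneg _) hbd hεn.1.le
        _ ≤ (1 : ℝ) ^ ε n + (∑ i : Fin d, ‖c i n‖) ^ ε n :=
            rpow_add_le_aux zero_le_one
              (Finset.sum_nonneg fun i _ => norm_nonneg _) hεn.1.le hεn.2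
        _ ≤ 1 + ∑ i : Fin d, (‖c i n‖) ^ ε n := by
            rw [Real.one_rpow]
            exact (add_le_add_iff_left 1).2 (rpow_sum_le_aux hεn.1 hεn.2 _ _
              fun i => norm_nonneg _)
        _ ≤ 1 + ∑ i : Fin d, M i :=
            (add_le_add_iff_left 1).2 (Finset.sum_le_sum fun i _ => hM i n)
    · have : (fun n => ‖(α n) ^ d + ∑ i : Fin d, c i n * (α n) ^ (i : ℕ)‖ ^ ε n)
          = fun _ => (0 : ℝ) := by
        funext n
        rw [hα n, norm_zero, Real.zero_rpow (hε n).1.ne']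
      rw [this]
      exact tendsto_const_nhds
  · intro ρ hρ
    refine ⟨fun n => ((ρ ^ (ε n)⁻¹ : ℝ) : ℂ), ⟨ρ, fun n => ?_⟩, ?_⟩
    · have : ‖((ρ ^ (ε n)⁻¹ : ℝ) : ℂ)‖ ^ ε n = ρ := by
        rw [Complex.norm_real, Real.norm_eq_abs, abs_of_nonneg (Real.rpow_nonneg hρ.le _),
          ← Real.rpow_mul hρ.le, inv_mul_cancel₀ (hε n).1.ne', Real.rpow_one]
      rw [this]
    · have : (fun n => ‖((ρ ^ (ε n)⁻¹ : ℝ) : ℂ)‖ ^ ε n) = fun _ => ρ := by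
        funext n
        rw [Complex.norm_real, Real.norm_eq_abs, abs_of_nonneg (Real.rpow_nonneg hρ.le _),
          ← Real.rpow_mul hρ.le, inv_mul_cancel₀ (hε n).1.ne', Real.rpow_one]
      rw [this]
      exact tendsto_const_nhds
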